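/- Let m, n ≥ 0 be integers with (m,n) ≠ (0,1) (so p = 2m+n ≥ 2) and let t ≥ 1 be an integer. Let S be the simple graph obtained from the complete graph K_t by subdividing every edge exactly once. Then S has arboricity at most 2, and there exists an (m,n)-colored mixed graph with underlying graph S whose (m,n)-colored mixed chromatic number is at least t. Consequently, the (m,n)-colored mixed chromatic number is not bounded by any function of arboricity. -/

import Mathlib

/-- The possible kinds of links from a vertex `u` to a vertex `v` in an
`(m,n)`-colored mixed graph: an arc `u → v` of one of `m` colors, an arc
`v → u` of one of `m` colors, or an (unoriented) edge of one of `n` colors. -/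
inductive Link (m n : ℕ) : Type where
  | arcOut : Fin m → Link m n
  | arcIn : Fin m → Link m n
  | edge : Fin n → Link m n

/-- The link as seen from the other endpoint. -/
def Link.flip {m n : ℕ} : Link m n → Link m n
  | .arcOut c => .arcIn c
  | .arcIn c => .arcOut c
  | .edge c => .edge c

/-- An `(m,n)`-colored mixed graph on vertex type `V`: between any two distinct
vertices there is at most one link (a colored arc in either direction or a
colored edge), and there are no loops. -/
structure CMGraph (m n : ℕ) (V : Type) where
  link : V → V → Option (Link m n)
  symm : ∀ u v, link v u = (link u v).map Link.flip
  loopless : ∀ v, link v v = none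

/-- The underlying simple graph of an `(m,n)`-colored mixed graph. -/
def CMGraph.underlying {m n : ℕ} {V : Type} (G : CMGraph m n V) : SimpleGraph V where
  Adj u v := (G.link u v).isSome
  symm := by
    constructor
    intro u v h
    rw [G.symm u v]
    rcases hx : G.link u v with _ | l
    · rw [hx] at h; simp at h
    · simp
  loopless := by
    constructor
    intro v h
    rw [G.loopless v] at h
    simp at h

/-- A homomorphism of `(m,n)`-colored mixed graphs: arcs map to arcs of the same
color and direction, edges map to edges of the same color. -/
def IsCMHom {m n : ℕ} {V W : Type} (G : CMGraph m n V) (H : CMGraph m n W)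
    (f : V → W) : Prop :=
  ∀ u v l, G.link u v = some l → H.link (f u) (f v) = some l

/-- `G` admits a homomorphism to some `(m,n)`-colored mixed graph on at most `k`
vertices, i.e. `χ_{(m,n)}(G) ≤ k`. -/
def CMChromAtMost {m n : ℕ} {V : Type} (G : CMGraph m n V) (k : ℕ) : Prop :=
  ∃ (W : Type) (inst : Fintype W) (H : CMGraph m n W) (f : V → W),
    @Fintype.card W inst ≤ k ∧ IsCMHom G H f

/-- Every `(m,n)`-colored mixed graph admitting a homomorphism from `G` has at
least `k` vertices, i.e. `χ_{(m,n)}(G) ≥ k`. -/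
def CMChromAtLeast {m n : ℕ} {V : Type} (G : CMGraph m n V) (k : ℕ) : Prop :=
  ∀ (W : Type) (inst : Fintype W) (H : CMGraph m n W) (f : V → W),
    IsCMHom G H f → k ≤ @Fintype.card W inst

/-- The acyclic chromatic number of `G` is at most `k`: there is a proper
`k`-coloring in which the union of any two color classes induces a forest. -/
def AcycChromAtMost {V : Type} (G : SimpleGraph V) (k : ℕ) : Prop :=
  ∃ c : V → Fin k, (∀ u v, G.Adj u v → c u ≠ c v) ∧
    ∀ i j : Fin k, (G.induce {v | c v = i ∨ c v = j}).IsAcyclic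

/-- The edge set of `G` can be decomposed into `r` forests. -/
def ArbAtMost {V : Type} (G : SimpleGraph V) (r : ℕ) : Prop :=
  ∃ F : Fin r → SimpleGraph V,
    (∀ i, F i ≤ G) ∧
    (∀ i, (F i).IsAcyclic) ∧
    (∀ u v, G.Adj u v → ∃ i, (F i).Adj u v) ∧
    (∀ i j, i ≠ j → ∀ u v, ¬ ((F i).Adj u v ∧ (F j).Adj u v))

/-- Every vertex of `G` has degree at most `d`. -/
def MaxDegAtMost {V : Type} (G : SimpleGraph V) (d : ℕ) : Prop :=
  ∀ v, (G.neighborSet v).ncard ≤ d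

/-- `G` is `d`-degenerate: every nonempty (induced) subgraph has a vertex of
degree at most `d` in it. -/
def DegenAtMost {V : Type} (G : SimpleGraph V) (d : ℕ) : Prop :=
  ∀ s : Set V, s.Nonempty → ∃ v ∈ s, (G.neighborSet v ∩ s).ncard ≤ d


/-- Vertices of the full subdivision of the complete graph `K_t`: the `t` original
vertices together with one vertex for every (unordered) pair of distinct originals. -/
abbrev SubdivVert (t : ℕ) : Type := Fin t ⊕ {e : Sym2 (Fin t) // ¬ e.IsDiag}

/-- The graph obtained from `K_t` by subdividing every edge exactly once. -/
def subdividedComplete (t : ℕ) : SimpleGraph (SubdivVert t) where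
  Adj a b :=
    match a, b with
    | Sum.inl i, Sum.inr e => i ∈ e.val
    | Sum.inr e, Sum.inl i => i ∈ e.val
    | _, _ => False
  symm := by
    constructor
    rintro (i | e) (j | f) h
    · exact h.elim
    · exact h
    · exact h
    · exact h.elim
  loopless := by
    constructor
    rintro (i | e) h
    · exact h
    · exact h

namespace SubdivAux

lemma Link.flip_flip {m n : ℕ} (l : Link m n) : l.flip.flip = l := by
  cases l <;> rfl

variable {t : ℕ}

/-- The smaller element of an unordered pair. -/
def emin (e : Sym2 (Fin t)) : Fin t :=
  Sym2.lift ⟨fun a b => min a b, fun a b => min_comm a b⟩ e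

/-- The larger element of an unordered pair. -/
def emax (e : Sym2 (Fin t)) : Fin t :=
  Sym2.lift ⟨fun a b => max a b, fun a b => max_comm a b⟩ e

lemma emin_mem (e : Sym2 (Fin t)) : emin e ∈ e := by
  induction e using Sym2.ind with
  | _ x y =>
    rcases min_choice x y with h | h <;>
      simp [emin, Sym2.lift_mk, Sym2.mem_iff, h]

lemma emax_mem (e : Sym2 (Fin t)) : emax e ∈ e := by
  induction e using Sym2.ind with
  | _ x y =>
    rcases max_choice x y with h | h <;>
      simp [emax, Sym2.lift_mk, Sym2.mem_iff, h]

lemma mem_eq {e : Sym2 (Fin t)} {i : Fin t} (h : i ∈ e) :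
    i = emin e ∨ i = emax e := by
  induction e using Sym2.ind with
  | _ x y =>
    rw [Sym2.mem_iff] at h
    rcases le_total x y with hxy | hxy <;> rcases h with rfl | rfl <;>
      simp [emin, emax, Sym2.lift_mk, min_eq_left, min_eq_right, max_eq_left, max_eq_right, hxy]

lemma emin_ne_emax {e : Sym2 (Fin t)} (h : ¬ e.IsDiag) : emin e ≠ emax e := by
  induction e using Sym2.ind with
  | _ x y =>
    rw [Sym2.mk_isDiag_iff] at h
    simp only [emin, emax, Sym2.lift_mk]
    rcases le_total x y with hxy | hxy <;>
      simp [min_eq_left, min_eq_right, max_eq_left, max_eq_right, hxy, h, Ne.symm h]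

/-- A "star forest" on the subdivision vertices: each subdivision vertex `e` is joined
only to the original vertex `sel e`. -/
def starF (sel : Sym2 (Fin t) → Fin t) : SimpleGraph (SubdivVert t) where
  Adj a b :=
    match a, b with
    | Sum.inl i, Sum.inr e => i ∈ e.val ∧ sel e.val = i
    | Sum.inr e, Sum.inl i => i ∈ e.val ∧ sel e.val = i
    | _, _ => False
  symm := by
    constructor
    rintro (i | e) (j | f) h
    · exact h.elim
    · exact h
    · exact h
    · exact h.elim
  loopless := by
    constructor
    rintro (i | e) h
    · exact h
    · exact h

lemma starF_noreach (sel : Sym2 (Fin t) → Fin t) (i : Fin t)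
    (e : {e : Sym2 (Fin t) // ¬ e.IsDiag}) (h : sel e.val = i) :
    ¬ ((starF sel) \ SimpleGraph.fromEdgeSet {s(Sum.inl i, Sum.inr e)}).Reachable
      (Sum.inr e) (Sum.inl i) := by
  intro hr
  obtain ⟨p⟩ := hr
  cases p with
  | cons hadj q =>
    rw [SimpleGraph.sdiff_adj] at hadj
    obtain ⟨h1, h2⟩ := hadj
    rename_i b
    cases b with
    | inr f => exact h1
    | inl j =>
      obtain ⟨hj1, hj2⟩ := h1
      have : j = i := by rw [← h, hj2]
      subst this
      apply h2
      rw [SimpleGraph.fromEdgeSet_adj]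
      exact ⟨by rw [Sym2.eq_swap]; simp, by simp⟩

lemma starF_acyclic (sel : Sym2 (Fin t) → Fin t) : (starF sel).IsAcyclic := by
  rw [SimpleGraph.isAcyclic_iff_forall_adj_isBridge]
  rintro (i | e) (j | f) h
  · exact h.elim
  · rw [SimpleGraph.isBridge_iff]
    exact fun hr => starF_noreach sel i f h.2 hr.symm
  · rw [Sym2.eq_swap, SimpleGraph.isBridge_iff]
    refine fun hr => starF_noreach sel j e h.2 ?_
    exact hr.symm
  · exact h.elim

lemma arb_two (t : ℕ) : ArbAtMost (subdividedComplete t) 2 := by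
  refine ⟨![starF emin, starF emax], ?_, ?_, ?_, ?_⟩
  · intro k
    fin_cases k <;>
    · rintro (i | e) (j | f) h
      · exact h.elim
      · exact h.1
      · exact h.1
      · exact h.elim
  · intro k
    fin_cases k
    · exact starF_acyclic emin
    · exact starF_acyclic emax
  · rintro (i | e) (j | f) h
    · exact h.elim
    · rcases mem_eq h with hm | hm
      · exact ⟨0, h, hm.symm⟩
      · exact ⟨1, h, hm.symm⟩
    · rcases mem_eq h with hm | hm
      · exact ⟨0, h, hm.symm⟩
      · exact ⟨1, h, hm.symm⟩
    · exact h.elim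
  · intro k l hkl u v hv
    have hkl' : (k = 0 ∧ l = 1) ∨ (k = 1 ∧ l = 0) := by
      fin_cases k <;> fin_cases l <;> simp_all
    have key : ∀ u v : SubdivVert t,
        ¬ ((starF (emin (t := t))).Adj u v ∧ (starF (emax (t := t))).Adj u v) := by
      rintro (i | e) (j | f) ⟨h1, h2⟩
      · exact h1.elim
      · exact emin_ne_emax f.prop (h1.2.trans h2.2.symm)
      · exact emin_ne_emax e.prop (h1.2.trans h2.2.symm)
      · exact h1.elim
    rcases hkl' with ⟨rfl, rfl⟩ | ⟨rfl, rfl⟩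
    · exact key u v ⟨by simpa using hv.1, by simpa using hv.2⟩
    · exact key u v ⟨by simpa using hv.2, by simpa using hv.1⟩

/-- The colored mixed graph on the subdivided complete graph: the link from the
smaller endpoint to the subdivision vertex is `A`, from the subdivision vertex to
the larger endpoint it is `B`. -/
def mix (m n : ℕ) (A B : Link m n) (t : ℕ) : CMGraph m n (SubdivVert t) where
  link a b :=
    match a, b with
    | Sum.inl i, Sum.inr e =>
        if i ∈ e.val then (if emin e.val = i then some A else some B.flip) else none
    | Sum.inr e, Sum.inl i =>
        (if i ∈ e.val then (if emin e.val = i then some A else some B.flip) else none).map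
          Link.flip
    | _, _ => none
  symm := by
    rintro (i | e) (j | f)
    · rfl
    · rfl
    · show (if _ then _ else _) = _
      rcases hx : (if j ∈ e.val then (if emin e.val = j then some A else some B.flip)
          else none) with _ | l <;> simp [hx, Link.flip_flip]
    · rfl
  loopless := by rintro (i | e) <;> rfl

lemma mix_underlying (m n : ℕ) (A B : Link m n) (t : ℕ) :
    (mix m n A B t).underlying = subdividedComplete t := by
  apply SimpleGraph.ext
  funext a b
  apply propext
  cases a with
  | inl i =>
    cases b with
    | inl j => simp [CMGraph.underlying, mix, subdividedComplete]
    | inr e =>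
      by_cases h : i ∈ e.val <;>
        simp [CMGraph.underlying, mix, subdividedComplete, h] <;>
        split <;> simp
  | inr e =>
    cases b with
    | inl j =>
      by_cases h : j ∈ e.val <;>
        simp [CMGraph.underlying, mix, subdividedComplete, h] <;>
        split <;> simp
    | inr f => simp [CMGraph.underlying, mix, subdividedComplete]

lemma mix_chrom (m n : ℕ) (A B : Link m n) (hAB : A ≠ B.flip) (t : ℕ) :
    CMChromAtLeast (mix m n A B t) t := by
  intro W inst H f hf
  have hinj : Function.Injective (fun i : Fin t => f (Sum.inl i)) := by
    intro i j hij
    by_contra hne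
    have hij : f (Sum.inl i) = f (Sum.inl j) := hij
    set e : {e : Sym2 (Fin t) // ¬ e.IsDiag} :=
      ⟨s(i, j), by rw [Sym2.mk_isDiag_iff]; exact hne⟩ with he
    have hi : i ∈ e.val := by simp [he]
    have hj : j ∈ e.val := by simp [he]
    have h1 : (mix m n A B t).link (Sum.inl (emin e.val)) (Sum.inr e) = some A := by
      show (if _ then _ else _) = _
      rw [if_pos (emin_mem e.val), if_pos rfl]
    have h2 : (mix m n A B t).link (Sum.inl (emax e.val)) (Sum.inr e) = some B.flip := by
      show (if _ then _ else _) = _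
      rw [if_pos (emax_mem e.val), if_neg (emin_ne_emax e.prop)]
    have hfe : f (Sum.inl (emin e.val)) = f (Sum.inl (emax e.val)) := by
      rcases mem_eq hi with hmi | hmi <;> rcases mem_eq hj with hmj | hmj
      · exact absurd (hmi.trans hmj.symm) hne
      · rw [← hmi, ← hmj]; exact hij
      · rw [← hmi, ← hmj]; exact hij.symm
      · exact absurd (hmi.trans hmj.symm) hne
    have hH1 := hf _ _ _ h1
    have hH2 := hf _ _ _ h2
    rw [hfe] at hH1
    rw [hH1] at hH2
    exact hAB (Option.some.inj hH2)
  calc t = Fintype.card (Fin t) := (Fintype.card_fin t).symm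
    _ ≤ Fintype.card W := Fintype.card_le_of_injective _ hinj

end SubdivAux

/-- For `(m,n) ≠ (0,1)` (so `p = 2m+n ≥ 2`) and `t ≥ 1`, the full
subdivision `S` of `K_t` has arboricity at most `2`, and there is an `(m,n)`-colored
mixed graph with underlying graph `S` whose `(m,n)`-colored mixed chromatic number is
at least `t`. -/
theorem subdivided_complete_arboricity_and_chromatic (m n t : ℕ)
    (hmn : (m, n) ≠ (0, 1)) (hp : 2 ≤ 2 * m + n) (ht : 1 ≤ t) :
    ArbAtMost (subdividedComplete t) 2 ∧
    ∃ M : CMGraph m n (SubdivVert t),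
      M.underlying = subdividedComplete t ∧ CMChromAtLeast M t := by
  refine ⟨SubdivAux.arb_two t, ?_⟩
  obtain ⟨A, B, hAB⟩ : ∃ A B : Link m n, A ≠ B.flip := by
    rcases Nat.eq_zero_or_pos m with hm | hm
    · subst hm
      have hn : 2 ≤ n := by omega
      refine ⟨Link.edge ⟨0, by omega⟩, Link.edge ⟨1, by omega⟩, ?_⟩
      simp [Link.flip, Fin.ext_iff]
    · refine ⟨Link.arcOut ⟨0, hm⟩, Link.arcOut ⟨0, hm⟩, ?_⟩
      simp [Link.flip]
  exact ⟨SubdivAux.mix m n A B t, SubdivAux.mix_underlying m n A B t,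
    SubdivAux.mix_chrom m n A B hAB t⟩
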